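/- In the Lambek–Grishin calculus LG (even with all Grishin class I and class IV interaction rules), for atomic formulas A and i, the sequent A ⊢ (A ∘− i) ⊗ i is not derivable. -/
import Mathlib


/-- Formulas of the Lambek–Grishin calculus with units: atoms, the units 1 and
⊥, the residuated family ⊗, ⊸, ∘− and the dual residuated family ⅋ (par) with
its co-implications ↽ and ⇁. -/
inductive Fm where
  | atom : ℕ → Fm
  | one : Fm                 -- 1
  | bot : Fm                 -- ⊥
  | tens : Fm → Fm → Fm      -- A ⊗ B
  | limp : Fm → Fm → Fm      -- A ⊸ B
  | rimp : Fm → Fm → Fm      -- A ∘− B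
  | par : Fm → Fm → Fm       -- A ⅋ B
  | lcoimp : Fm → Fm → Fm    -- A ↽ B
  | rcoimp : Fm → Fm → Fm    -- A ⇁ B
  deriving DecidableEq

/-- Structures: formulas, the empty structure ε and the structural connectives
∘, <, > . -/
inductive St where
  | of : Fm → St
  | eps : St
  | comma : St → St → St     -- ∘
  | lt : St → St → St        -- <
  | gt : St → St → St        -- >
  deriving DecidableEq

/-- Derivability in the display sequent calculus. -/
inductive Deriv : St → St → Prop
  -- axiom
  | ax (A : Fm) : Deriv (St.of A) (St.of A)
  -- logical rules for the units
  | lone {Δ} : Deriv St.eps Δ → Deriv (St.of Fm.one) Δ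
  | rone : Deriv St.eps (St.of Fm.one)
  | lbot : Deriv (St.of Fm.bot) St.eps
  | rbot {Γ} : Deriv Γ St.eps → Deriv Γ (St.of Fm.bot)
  -- logical rules for ⊗, ⊸, ∘−
  | ltens {A B Δ} : Deriv (St.comma (St.of A) (St.of B)) Δ → Deriv (St.of (Fm.tens A B)) Δ
  | rtens {A B Γ₁ Γ₂} : Deriv Γ₁ (St.of A) → Deriv Γ₂ (St.of B) →
      Deriv (St.comma Γ₁ Γ₂) (St.of (Fm.tens A B))
  | llimp {A B Γ Δ} : Deriv Γ (St.of A) → Deriv (St.of B) Δ →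
      Deriv (St.of (Fm.limp A B)) (St.gt Γ Δ)
  | rlimp {A B Γ} : Deriv Γ (St.gt (St.of A) (St.of B)) → Deriv Γ (St.of (Fm.limp A B))
  | lrimp {A B Γ Δ} : Deriv (St.of A) Δ → Deriv Γ (St.of B) →
      Deriv (St.of (Fm.rimp A B)) (St.lt Δ Γ)
  | rrimp {A B Γ} : Deriv Γ (St.lt (St.of A) (St.of B)) → Deriv Γ (St.of (Fm.rimp A B))
  -- logical rules for ⅋, ↽, ⇁
  | lpar {A B Δ₁ Δ₂} : Deriv (St.of A) Δ₁ → Deriv (St.of B) Δ₂ →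
      Deriv (St.of (Fm.par A B)) (St.comma Δ₁ Δ₂)
  | rpar {A B Γ} : Deriv Γ (St.comma (St.of A) (St.of B)) → Deriv Γ (St.of (Fm.par A B))
  | lrcoimp {A B Δ} : Deriv (St.gt (St.of A) (St.of B)) Δ → Deriv (St.of (Fm.rcoimp A B)) Δ
  | rrcoimp {A B Γ Δ} : Deriv (St.of A) Δ → Deriv Γ (St.of B) →
      Deriv (St.gt Δ Γ) (St.of (Fm.rcoimp A B))
  | llcoimp {A B Δ} : Deriv (St.lt (St.of A) (St.of B)) Δ → Deriv (St.of (Fm.lcoimp A B)) Δ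
  | rlcoimp {A B Γ Δ} : Deriv Γ (St.of A) → Deriv (St.of B) Δ →
      Deriv (St.lt Γ Δ) (St.of (Fm.lcoimp A B))
  -- display rules (residuation): Γ₁ ∘ Γ₂ ⊢ Δ ⇔ Γ₁ ⊢ Δ < Γ₂ ⇔ Γ₂ ⊢ Γ₁ > Δ
  | rc1 {Γ₁ Γ₂ Δ} : Deriv (St.comma Γ₁ Γ₂) Δ → Deriv Γ₁ (St.lt Δ Γ₂)
  | rc1' {Γ₁ Γ₂ Δ} : Deriv Γ₁ (St.lt Δ Γ₂) → Deriv (St.comma Γ₁ Γ₂) Δ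
  | rc2 {Γ₁ Γ₂ Δ} : Deriv (St.comma Γ₁ Γ₂) Δ → Deriv Γ₂ (St.gt Γ₁ Δ)
  | rc2' {Γ₁ Γ₂ Δ} : Deriv Γ₂ (St.gt Γ₁ Δ) → Deriv (St.comma Γ₁ Γ₂) Δ
  -- display rules (dual residuation): Γ ⊢ Δ₁ ∘ Δ₂ ⇔ Γ < Δ₂ ⊢ Δ₁ ⇔ Δ₁ > Γ ⊢ Δ₂
  | drc1 {Γ Δ₁ Δ₂} : Deriv Γ (St.comma Δ₁ Δ₂) → Deriv (St.lt Γ Δ₂) Δ₁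
  | drc1' {Γ Δ₁ Δ₂} : Deriv (St.lt Γ Δ₂) Δ₁ → Deriv Γ (St.comma Δ₁ Δ₂)
  | drc2 {Γ Δ₁ Δ₂} : Deriv Γ (St.comma Δ₁ Δ₂) → Deriv (St.gt Δ₁ Γ) Δ₂
  | drc2' {Γ Δ₁ Δ₂} : Deriv (St.gt Δ₁ Γ) Δ₂ → Deriv Γ (St.comma Δ₁ Δ₂)
  -- Grishin class IV interaction rules (mixed associativity and commutativity)
  | gr1 {V W X Y} : Deriv (St.comma V W) (St.comma X Y) → Deriv (St.comma (St.gt X V) W) Y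
  | gr2 {V W X Y} : Deriv (St.comma V W) (St.comma X Y) → Deriv (St.comma V (St.gt X W)) Y
  | gr3 {V W X Y} : Deriv (St.comma V W) (St.comma X Y) → Deriv (St.comma V (St.lt W Y)) X
  | gr4 {V W X Y} : Deriv (St.comma V W) (St.comma X Y) → Deriv (St.comma (St.lt V Y) W) X
  -- Grishin class I interaction rules (the converse directions)
  | gr1' {V W X Y} : Deriv (St.comma (St.gt X V) W) Y → Deriv (St.comma V W) (St.comma X Y)
  | gr2' {V W X Y} : Deriv (St.comma V (St.gt X W)) Y → Deriv (St.comma V W) (St.comma X Y)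
  | gr3' {V W X Y} : Deriv (St.comma V (St.lt W Y)) X → Deriv (St.comma V W) (St.comma X Y)
  | gr4' {V W X Y} : Deriv (St.comma (St.lt V Y) W) X → Deriv (St.comma V W) (St.comma X Y)

namespace LGModel

/-- Łukasiewicz 3-valued ops on `Fin 3`. -/
def t (a b : Fin 3) : Fin 3 := ⟨max (a.val + b.val) 2 - 2, by omega⟩
def p (a b : Fin 3) : Fin 3 := ⟨min (a.val + b.val) 2, by omega⟩
def N (a : Fin 3) : Fin 3 := ⟨2 - a.val, by omega⟩

lemma mono_t {a b c d : Fin 3} : a ≤ b → c ≤ d → t a c ≤ t b d := by revert a b c d; decide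
lemma mono_p {a b c d : Fin 3} : a ≤ b → c ≤ d → p a c ≤ p b d := by revert a b c d; decide
lemma anti_N {a b : Fin 3} : a ≤ b → N b ≤ N a := by revert a b; decide
lemma rc1L {a b c : Fin 3} : t a b ≤ c → a ≤ p c (N b) := by revert a b c; decide
lemma rc1R {a b c : Fin 3} : a ≤ p c (N b) → t a b ≤ c := by revert a b c; decide
lemma rc2L {a b c : Fin 3} : t a b ≤ c → b ≤ p (N a) c := by revert a b c; decide
lemma rc2R {a b c : Fin 3} : b ≤ p (N a) c → t a b ≤ c := by revert a b c; decide
lemma drc1L {a b c : Fin 3} : a ≤ p b c → t a (N c) ≤ b := by revert a b c; decide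
lemma drc1R {a b c : Fin 3} : t a (N c) ≤ b → a ≤ p b c := by revert a b c; decide
lemma drc2L {a b c : Fin 3} : a ≤ p b c → t (N b) a ≤ c := by revert a b c; decide
lemma drc2R {a b c : Fin 3} : t (N b) a ≤ c → a ≤ p b c := by revert a b c; decide
lemma g1 {v w x y : Fin 3} : t v w ≤ p x y → t (t (N x) v) w ≤ y := by revert v w x y; decide
lemma g1' {v w x y : Fin 3} : t (t (N x) v) w ≤ y → t v w ≤ p x y := by revert v w x y; decide
lemma g2 {v w x y : Fin 3} : t v w ≤ p x y → t v (t (N x) w) ≤ y := by revert v w x y; decide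
lemma g2' {v w x y : Fin 3} : t v (t (N x) w) ≤ y → t v w ≤ p x y := by revert v w x y; decide
lemma g3 {v w x y : Fin 3} : t v w ≤ p x y → t v (t w (N y)) ≤ x := by revert v w x y; decide
lemma g3' {v w x y : Fin 3} : t v (t w (N y)) ≤ x → t v w ≤ p x y := by revert v w x y; decide
lemma g4 {v w x y : Fin 3} : t v w ≤ p x y → t (t v (N y)) w ≤ x := by revert v w x y; decide
lemma g4' {v w x y : Fin 3} : t (t v (N y)) w ≤ x → t v w ≤ p x y := by revert v w x y; decide

/-- Interpretation of formulas. -/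
def fmval (v : ℕ → Fin 3) : Fm → Fin 3
  | Fm.atom k => v k
  | Fm.one => 2
  | Fm.bot => 0
  | Fm.tens a b => t (fmval v a) (fmval v b)
  | Fm.limp a b => p (N (fmval v a)) (fmval v b)
  | Fm.rimp a b => p (fmval v a) (N (fmval v b))
  | Fm.par a b => p (fmval v a) (fmval v b)
  | Fm.lcoimp a b => t (fmval v a) (N (fmval v b))
  | Fm.rcoimp a b => t (N (fmval v a)) (fmval v b)

mutual
/-- Left (antecedent) interpretation of structures. -/
def lval (v : ℕ → Fin 3) : St → Fin 3
  | St.of F => fmval v F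
  | St.eps => 2
  | St.comma a b => t (lval v a) (lval v b)
  | St.lt a b => t (lval v a) (N (rval v b))
  | St.gt a b => t (N (rval v a)) (lval v b)
/-- Right (succedent) interpretation of structures. -/
def rval (v : ℕ → Fin 3) : St → Fin 3
  | St.of F => fmval v F
  | St.eps => 0
  | St.comma a b => p (rval v a) (rval v b)
  | St.lt a b => p (rval v a) (N (lval v b))
  | St.gt a b => p (N (lval v a)) (rval v b)
end

theorem sound (v : ℕ → Fin 3) {Γ Δ} (d : Deriv Γ Δ) : lval v Γ ≤ rval v Δ := by
  induction d with
  | ax A => exact le_refl _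
  | lone _ ih => exact ih
  | rone => exact le_refl _
  | lbot => exact le_refl _
  | rbot _ ih => exact ih
  | ltens _ ih => exact ih
  | rtens _ _ ih1 ih2 => exact mono_t ih1 ih2
  | llimp _ _ ih1 ih2 => exact mono_p (anti_N ih1) ih2
  | rlimp _ ih => exact ih
  | lrimp _ _ ih1 ih2 => exact mono_p ih1 (anti_N ih2)
  | rrimp _ ih => exact ih
  | lpar _ _ ih1 ih2 => exact mono_p ih1 ih2
  | rpar _ ih => exact ih
  | lrcoimp _ ih => exact ih
  | rrcoimp _ _ ih1 ih2 => exact mono_t (anti_N ih1) ih2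
  | llcoimp _ ih => exact ih
  | rlcoimp _ _ ih1 ih2 => exact mono_t ih1 (anti_N ih2)
  | rc1 _ ih => exact rc1L ih
  | rc1' _ ih => exact rc1R ih
  | rc2 _ ih => exact rc2L ih
  | rc2' _ ih => exact rc2R ih
  | drc1 _ ih => exact drc1L ih
  | drc1' _ ih => exact drc1R ih
  | drc2 _ ih => exact drc2L ih
  | drc2' _ ih => exact drc2R ih
  | gr1 _ ih => exact g1 ih
  | gr2 _ ih => exact g2 ih
  | gr3 _ ih => exact g3 ih
  | gr4 _ ih => exact g4 ih
  | gr1' _ ih => exact g1' ih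
  | gr2' _ ih => exact g2' ih
  | gr3' _ ih => exact g3' ih
  | gr4' _ ih => exact g4' ih

end LGModel


/-- In the Lambek–Grishin calculus LG, even with all Grishin class I and class
IV interaction rules, for distinct atomic formulas A and i the sequent
A ⊢ (A ∘− i) ⊗ i is not derivable. -/
theorem not_derivable_atom (n m : ℕ) (h : n ≠ m) :
    ¬ Deriv (St.of (Fm.atom n))
        (St.of (Fm.tens (Fm.rimp (Fm.atom n) (Fm.atom m)) (Fm.atom m))) := by
  intro d
  have := LGModel.sound (fun k => if k = n then (2 : Fin 3) else 1) d
  simp only [LGModel.lval, LGModel.rval, LGModel.fmval, if_pos rfl,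
    if_neg (Ne.symm h)] at this
  exact absurd this (by decide)
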